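/- Let H be a bipartite graph with parts A, B of size 8 and minimum degree at least 3. If M is a perfect matching of H, then there exists a subset M' ⊆ M with |M'| ≥ 6 such that for every edge e ∈ M', the graph H − e contains a perfect matching. -/

import Mathlib

/-!
An `(8,3)`-bigraph encoded by `N : Fin 8 → Finset (Fin 8)`.  Given a perfect
matching `f` (whose edges are the pairs `(x, f x)`), at least 6 of its edges
`e` are such that `H - e` still has a perfect matching (a perfect matching `g`
with `g x ≠ f x` at the endpoint `x` of `e`).
-/

/-- From a closed walk (chain `w` with head `t` and an edge from its last element
back to `t`) extract a duplicate-free closed walk through `t`. -/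
private lemma cycle_extract {α : Type*} {r : α → α → Prop} {t : α} :
    ∀ (n : ℕ) (w : List α), w.length ≤ n → ∀ (hne : w ≠ []), w.head hne = t → w.Chain' r →
      r (w.getLast hne) t →
      ∃ (d : List α) (hd : d ≠ []), d.Nodup ∧ d.head hd = t ∧ d.Chain' r ∧
        r (d.getLast hd) t := by
  intro n
  induction n with
  | zero =>
    intro w hc hne
    exact absurd (List.length_eq_zero_iff.mp (Nat.le_zero.mp hc)) hne
  | succ n ih =>
    intro w hlen hne hhead hchain hlast
    by_cases hnd : w.Nodup
    · exact ⟨w, hne, hnd, hhead, hchain, hlast⟩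
    rw [List.nodup_iff_injective_get, Function.Injective] at hnd
    push_neg at hnd
    obtain ⟨i, j, hget, hijne⟩ := hnd
    -- produce indices I < J with equal entries
    obtain ⟨I, J, hIJ, hJ, heq⟩ :
        ∃ I J, ∃ (hIJ : I < J) (hJ : J < w.length), w.get ⟨I, hIJ.trans hJ⟩ = w.get ⟨J, hJ⟩ := by
      rcases Nat.lt_or_ge i.1 j.1 with h | h
      · exact ⟨i.1, j.1, h, j.2, by simpa using hget⟩
      · have : j.1 < i.1 := by
          rcases Nat.lt_or_ge j.1 i.1 with h' | h'
          · exact h'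
          · exact absurd (Fin.ext (le_antisymm h' h)) hijne
        exact ⟨j.1, i.1, this, i.2, by simpa using hget.symm⟩
    simp only [List.get_eq_getElem] at heq
    set d : List α := w.take (I + 1) ++ w.drop (J + 1) with hd_def
    have hlen_take : (w.take (I + 1)).length = I + 1 := by
      rw [List.length_take]; omega
    have htne : w.take (I + 1) ≠ [] := by
      rw [← List.length_pos_iff]; omega
    have hdne : d ≠ [] := by
      rw [← List.length_pos_iff, hd_def, List.length_append]; omega
    have hdlen : d.length = (I + 1) + (w.length - (J + 1)) := by
      rw [hd_def, List.length_append, hlen_take, List.length_drop]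
    have hd0 : d.head hdne = t := by
      rw [List.head_eq_getElem_zero] at hhead ⊢
      calc d[0]'(by omega) = (List.take (I+1) w)[0]'(by omega) :=
            List.getElem_append_left (by omega)
        _ = w[0]'(by omega) := List.getElem_take
        _ = t := hhead
    have hdchain : d.Chain' r := by
      refine List.isChain_append.mpr ⟨hchain.take _, hchain.drop _, ?_⟩
      intro x hx y hy
      rw [List.getLast?_eq_getElem?, hlen_take, Nat.add_sub_cancel] at hx
      rw [List.head?_drop] at hy
      have hJ1 : J + 1 < w.length := by
        by_contra h
        rw [List.getElem?_eq_none (by omega)] at hy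
        exact Option.not_mem_none y hy
      rw [List.getElem?_eq_getElem (by omega : I < (w.take (I+1)).length)] at hx
      rw [List.getElem?_eq_getElem hJ1] at hy
      have hx' : x = w[I]'(by omega) := by
        have h5 := Option.some_injective _ hx.symm
        rw [h5]
        exact List.getElem_take
      have hy' : y = w[J + 1]'hJ1 := Option.some_injective _ hy.symm
      subst hx'; subst hy'
      rw [heq]
      have := List.isChain_iff_getElem.mp hchain J (by omega)
      simpa using this
    have hdlast : r (d.getLast hdne) t := by
      by_cases hJend : J + 1 = w.length
      · have hdrop : w.drop (J + 1) = [] := List.drop_eq_nil_iff.mpr (by omega)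
        have h1 : d.length - 1 = I := by omega
        have h2 : d.length - 1 < (List.take (I+1) w).length := by omega
        have hJw : J = w.length - 1 := by omega
        have : d.getLast hdne = w.getLast hne := by
          rw [List.getLast_eq_getElem, List.getLast_eq_getElem]
          calc d[d.length - 1]'(by omega)
              = (List.take (I+1) w)[d.length - 1]'h2 := List.getElem_append_left h2
            _ = w[d.length - 1]'(by omega) := List.getElem_take
            _ = w[I]'(by omega) := by simp only [h1]
            _ = w[J] := heq
            _ = w[w.length - 1]'(by omega) := by simp only [hJw]
        rw [this]; exact hlast
      · have hdrne : w.drop (J + 1) ≠ [] := by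
          rw [← List.length_pos_iff, List.length_drop]; omega
        have : d.getLast hdne = w.getLast hne := by
          have e1 : d.getLast hdne = (List.drop (J+1) w).getLast hdrne :=
            List.getLast_append_of_right_ne_nil _ _ hdrne
          have e2 : (List.drop (J+1) w).getLast hdrne = w[w.length - 1]'(by omega) := by
            rw [List.getLast_eq_getElem]
            have hidx : (J+1) + ((List.drop (J+1) w).length - 1) = w.length - 1 := by
              simp only [List.length_drop]; omega
            calc (List.drop (J+1) w)[(List.drop (J+1) w).length - 1]'(by
                  simp only [List.length_drop]; omega)
                = w[(J+1) + ((List.drop (J+1) w).length - 1)]'(by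
                  simp only [List.length_drop]; omega) :=
                  List.getElem_drop
              _ = w[w.length - 1]'(by omega) := by simp only [hidx]
          exact e1.trans (e2.trans (List.getLast_eq_getElem hne).symm)
        rw [this]; exact hlast
    exact ih d (by omega) hdne hd0 hdchain hdlast

/-- On a duplicate-free closed walk, `formPerm` moves each member along an edge. -/
private lemma formPerm_mem_step {α : Type*} [DecidableEq α] {r : α → α → Prop} {t : α}
    {d : List α} (hd : d ≠ []) (hnd : d.Nodup) (hh : d.head hd = t)
    (hchain : d.Chain' r) (hlast : r (d.getLast hd) t) :
    ∀ x ∈ d, r x (d.formPerm x) := by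
  intro x hx
  obtain ⟨i, hi, rfl⟩ := List.mem_iff_getElem.mp hx
  rw [List.formPerm_apply_getElem _ hnd i hi]
  by_cases h : i + 1 < d.length
  · have h2 : (i + 1) % d.length = i + 1 := Nat.mod_eq_of_lt h
    have := List.isChain_iff_getElem.mp hchain i (by omega)
    convert this using 2
  · have hi' : i = d.length - 1 := by omega
    have h2 : (i + 1) % d.length = 0 := by
      rw [show i + 1 = d.length by omega, Nat.mod_self]
    simp only [h2]
    have hgl : d[i] = d.getLast hd := by subst hi'; exact (List.getLast_eq_getElem hd).symm
    have hhd : d[0]'(by omega) = t := by rw [← List.head_eq_getElem_zero hd]; exact hh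
    rw [hgl, hhd]
    exact hlast

/-- If `t` lies on a directed cycle of the exchange digraph, the matching can be
modified at `t`. -/
private lemma good_of_cycle (N : Fin 8 → Finset (Fin 8)) (f : Fin 8 ≃ Fin 8)
    (hf : ∀ x, f x ∈ N x) (t : Fin 8)
    (h : Relation.TransGen (fun x y => f y ∈ N x ∧ y ≠ x) t t) :
    ∃ g : Fin 8 ≃ Fin 8, (∀ z, g z ∈ N z) ∧ g t ≠ f t := by
  set r : Fin 8 → Fin 8 → Prop := fun x y => f y ∈ N x ∧ y ≠ x with hr
  obtain ⟨b, hb, hbt⟩ := Relation.TransGen.tail'_iff.mp h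
  obtain ⟨l, hl, hlast⟩ := List.exists_isChain_cons_of_relationReflTransGen hb
  have hne : (t :: l) ≠ [] := List.cons_ne_nil _ _
  have hchain : List.Chain' r (t :: l) := hl
  have hlast' : r ((t :: l).getLast hne) t := by rw [hlast]; exact hbt
  obtain ⟨d, hd, hnd, hh, hch, hla⟩ :=
    cycle_extract (r := r) (t := t) (t :: l).length (t :: l) le_rfl hne rfl hchain hlast'
  have hstep : ∀ x ∈ d, r x (d.formPerm x) := formPerm_mem_step hd hnd hh hch hla
  refine ⟨(d.formPerm).trans f, ?_, ?_⟩
  · intro z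
    by_cases hz : z ∈ d
    · exact (hstep z hz).1
    · show f (d.formPerm z) ∈ N z
      rw [List.formPerm_apply_of_notMem hz]
      exact hf z
  · have htd : t ∈ d := hh ▸ List.head_mem hd
    have := (hstep t htd).2
    show f (d.formPerm t) ≠ f t
    exact fun hc => this (f.injective hc)

/-- In a loopless digraph on `Fin 8` with all out-degrees and in-degrees at least 2,
there cannot be three distinct vertices lying on no directed cycle. -/
private lemma no_three_bad (step : Fin 8 → Fin 8 → Prop) [inst : DecidableRel step]
    (hirr : ∀ x y, step x y → y ≠ x)
    (hout : ∀ x, 2 ≤ (Finset.univ.filter (fun y => step x y)).card)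
    (hin : ∀ y, 2 ≤ (Finset.univ.filter (fun x => step x y)).card)
    (bad : Fin 8 → Prop)
    (hbad : ∀ t, bad t → ¬ Relation.TransGen step t t) :
    ∀ a b c, bad a → bad b → bad c → a = b ∨ a = c ∨ b = c := by
  classical
  set R : Fin 8 → Fin 8 → Prop := Relation.TransGen step with hR
  set F : Fin 8 → Finset (Fin 8) := fun t => Finset.univ.filter (fun y => R t y) with hF
  set P : Fin 8 → Finset (Fin 8) := fun t => Finset.univ.filter (fun x => R x t) with hP
  have hmemF : ∀ t y, y ∈ F t ↔ R t y := by intro t y; simp [hF]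
  have hmemP : ∀ t x, x ∈ P t ↔ R x t := by intro t x; simp [hP]
  have hF3 : ∀ t, 3 ≤ (F t).card := by
    intro t
    obtain ⟨b, hb⟩ := Finset.card_pos.mp (lt_of_lt_of_le (by norm_num) (hout t))
    rw [Finset.mem_filter] at hb
    obtain ⟨u, hu, v, hv, huv⟩ :=
      Finset.one_lt_card.mp (lt_of_lt_of_le (by norm_num) (hout b))
    rw [Finset.mem_filter] at hu hv
    have h1 : b ∈ F t := (hmemF t b).mpr (Relation.TransGen.single hb.2)
    have h2 : u ∈ F t := (hmemF t u).mpr ((Relation.TransGen.single hb.2).tail hu.2)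
    have h3 : v ∈ F t := (hmemF t v).mpr ((Relation.TransGen.single hb.2).tail hv.2)
    have hub : u ≠ b := hirr b u hu.2
    have hvb : v ≠ b := hirr b v hv.2
    have hsub : ({b, u, v} : Finset (Fin 8)) ⊆ F t := by
      intro x hx
      simp only [Finset.mem_insert, Finset.mem_singleton] at hx
      rcases hx with rfl | rfl | rfl <;> assumption
    have hcard : ({b, u, v} : Finset (Fin 8)).card = 3 := by
      rw [Finset.card_insert_of_notMem (by simp [hub.symm, hvb.symm]),
        Finset.card_insert_of_notMem (by simp [huv]), Finset.card_singleton]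
    calc (3:ℕ) = ({b, u, v} : Finset (Fin 8)).card := hcard.symm
      _ ≤ (F t).card := Finset.card_le_card hsub
  have hP3 : ∀ t, 3 ≤ (P t).card := by
    intro t
    obtain ⟨b, hb⟩ := Finset.card_pos.mp (lt_of_lt_of_le (by norm_num) (hin t))
    rw [Finset.mem_filter] at hb
    obtain ⟨u, hu, v, hv, huv⟩ :=
      Finset.one_lt_card.mp (lt_of_lt_of_le (by norm_num) (hin b))
    rw [Finset.mem_filter] at hu hv
    have h1 : b ∈ P t := (hmemP t b).mpr (Relation.TransGen.single hb.2)
    have h2 : u ∈ P t :=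
      (hmemP t u).mpr (Relation.TransGen.head hu.2 (Relation.TransGen.single hb.2))
    have h3 : v ∈ P t :=
      (hmemP t v).mpr (Relation.TransGen.head hv.2 (Relation.TransGen.single hb.2))
    have hub : u ≠ b := fun h => (hirr u b hu.2) h.symm
    have hvb : v ≠ b := fun h => (hirr v b hv.2) h.symm
    have hsub : ({b, u, v} : Finset (Fin 8)) ⊆ P t := by
      intro x hx
      simp only [Finset.mem_insert, Finset.mem_singleton] at hx
      rcases hx with rfl | rfl | rfl <;> assumption
    have hcard : ({b, u, v} : Finset (Fin 8)).card = 3 := by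
      rw [Finset.card_insert_of_notMem (by simp [hub.symm, hvb.symm]),
        Finset.card_insert_of_notMem (by simp [huv]), Finset.card_singleton]
    calc (3:ℕ) = ({b, u, v} : Finset (Fin 8)).card := hcard.symm
      _ ≤ (P t).card := Finset.card_le_card hsub
  have hdisj : ∀ t, bad t → Disjoint (F t) (P t) := by
    intro t ht
    rw [Finset.disjoint_left]
    intro x hx1 hx2
    exact hbad t ht (((hmemF t x).mp hx1).trans ((hmemP t x).mp hx2))
  have hcard7 : ∀ t, bad t → (F t).card + (P t).card ≤ 7 := by
    intro t ht
    have htno : t ∉ F t ∪ P t := by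
      rw [Finset.mem_union]
      rintro (h | h)
      · exact hbad t ht ((hmemF t t).mp h)
      · exact hbad t ht ((hmemP t t).mp h)
    have h8 : (insert t (F t ∪ P t)).card ≤ 8 := by
      simpa using Finset.card_le_univ (insert t (F t ∪ P t))
    rw [Finset.card_insert_of_notMem htno,
      Finset.card_union_of_disjoint (hdisj t ht)] at h8
    omega
  have chain3 : ∀ a b c, bad a → bad b → bad c → R a b → R b c → False := by
    intro a b c ha hb hc hab hbc
    have hsub : insert a (insert b (P a)) ⊆ P c := by
      intro x hx
      rcases Finset.mem_insert.mp hx with rfl | hx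
      · exact (hmemP c x).mpr (hab.trans hbc)
      rcases Finset.mem_insert.mp hx with rfl | hx
      · exact (hmemP c x).mpr hbc
      · exact (hmemP c x).mpr (((hmemP a x).mp hx).trans (hab.trans hbc))
    have hbPa : b ∉ P a := fun h => hbad b hb (((hmemP a b).mp h).trans hab)
    have haPa : a ∉ insert b (P a) := by
      rw [Finset.mem_insert]
      rintro (rfl | h)
      · exact hbad a ha hab
      · exact hbad a ha ((hmemP a a).mp h)
    have hle := Finset.card_le_card hsub
    rw [Finset.card_insert_of_notMem haPa, Finset.card_insert_of_notMem hbPa] at hle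
    have := hF3 c; have := hP3 a; have := hcard7 c hc
    omega
  have vcase : ∀ a b c, bad a → bad b → bad c → a ≠ c → R a b → R c b →
      ¬ R a c → ¬ R c a → False := by
    intro a b c ha hb hc hac hab hcb hnac hnca
    have hsub : insert a (insert c (P a)) ⊆ P b := by
      intro x hx
      rcases Finset.mem_insert.mp hx with rfl | hx
      · exact (hmemP b x).mpr hab
      rcases Finset.mem_insert.mp hx with rfl | hx
      · exact (hmemP b x).mpr hcb
      · exact (hmemP b x).mpr (((hmemP a x).mp hx).trans hab)
    have hcPa : c ∉ P a := fun h => hnca ((hmemP a c).mp h)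
    have haPa : a ∉ insert c (P a) := by
      rw [Finset.mem_insert]
      rintro (h | h)
      · exact hac h
      · exact hbad a ha ((hmemP a a).mp h)
    have hle := Finset.card_le_card hsub
    rw [Finset.card_insert_of_notMem haPa, Finset.card_insert_of_notMem hcPa] at hle
    have := hF3 b; have := hP3 a; have := hcard7 b hb
    omega
  have lcase : ∀ a b c, bad a → bad b → bad c → a ≠ c → R b a → R b c →
      ¬ R a c → ¬ R c a → False := by
    intro a b c ha hb hc hac hba hbc hnac hnca
    have hsub : insert a (insert c (F a)) ⊆ F b := by
      intro x hx
      rcases Finset.mem_insert.mp hx with rfl | hx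
      · exact (hmemF b x).mpr hba
      rcases Finset.mem_insert.mp hx with rfl | hx
      · exact (hmemF b x).mpr hbc
      · exact (hmemF b x).mpr (hba.trans ((hmemF a x).mp hx))
    have hcFa : c ∉ F a := fun h => hnac ((hmemF a c).mp h)
    have haFa : a ∉ insert c (F a) := by
      rw [Finset.mem_insert]
      rintro (h | h)
      · exact hac h
      · exact hbad a ha ((hmemF a a).mp h)
    have hle := Finset.card_le_card hsub
    rw [Finset.card_insert_of_notMem haFa, Finset.card_insert_of_notMem hcFa] at hle
    have := hF3 a; have := hP3 b; have := hcard7 b hb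
    omega
  have claimA : ∀ t u v, bad t → t ≠ u → t ≠ v → u ≠ v →
      (R t u ∨ R u t) ∨ (R t v ∨ R v t) := by
    intro t u v ht htu htv huv
    by_contra hcon
    push_neg at hcon
    obtain ⟨⟨h1, h2⟩, h3, h4⟩ := hcon
    have hu : u ∉ insert v (insert t (F t ∪ P t)) := by
      intro hmem
      rcases Finset.mem_insert.mp hmem with rfl | hmem
      · exact huv rfl
      rcases Finset.mem_insert.mp hmem with rfl | hmem
      · exact htu rfl
      rcases Finset.mem_union.mp hmem with h | h
      · exact h1 ((hmemF t u).mp h)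
      · exact h2 ((hmemP t u).mp h)
    have hv : v ∉ insert t (F t ∪ P t) := by
      intro hmem
      rcases Finset.mem_insert.mp hmem with rfl | hmem
      · exact htv rfl
      rcases Finset.mem_union.mp hmem with h | h
      · exact h3 ((hmemF t v).mp h)
      · exact h4 ((hmemP t v).mp h)
    have ht' : t ∉ F t ∪ P t := by
      rw [Finset.mem_union]
      rintro (h | h)
      · exact hbad t ht ((hmemF t t).mp h)
      · exact hbad t ht ((hmemP t t).mp h)
    have hcard : (insert u (insert v (insert t (F t ∪ P t)))).card ≤ 8 := by
      simpa using Finset.card_le_univ (insert u (insert v (insert t (F t ∪ P t))))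
    rw [Finset.card_insert_of_notMem hu, Finset.card_insert_of_notMem hv,
      Finset.card_insert_of_notMem ht',
      Finset.card_union_of_disjoint (hdisj t ht)] at hcard
    have := hF3 t; have := hP3 t
    omega
  have shared : ∀ x y z, bad x → bad y → bad z → x ≠ y → x ≠ z → y ≠ z →
      (R x y ∨ R y x) → (R x z ∨ R z x) → False := by
    intro x y z hx hy hz hxy hxz hyz h1 h2
    rcases h1 with h1 | h1 <;> rcases h2 with h2 | h2
    · by_cases h3 : R y z
      · exact chain3 x y z hx hy hz h1 h3
      by_cases h4 : R z y
      · exact chain3 x z y hx hz hy h2 h4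
      · exact lcase y x z hy hx hz hyz h1 h2 h3 h4
    · exact chain3 z x y hz hx hy h2 h1
    · exact chain3 y x z hy hx hz h1 h2
    · by_cases h3 : R y z
      · exact chain3 y z x hy hz hx h3 h2
      by_cases h4 : R z y
      · exact chain3 z y x hz hy hx h4 h1
      · exact vcase y x z hy hx hz hyz h1 h2 h3 h4
  intro a b c ha hb hc
  by_contra hcon
  push_neg at hcon
  obtain ⟨hab, hac, hbc⟩ := hcon
  have compsymm : ∀ {x y : Fin 8}, (R x y ∨ R y x) → (R y x ∨ R x y) := fun h => h.symm
  rcases claimA a b c ha hab hac hbc with h1 | h1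
  · rcases claimA c a b hc (Ne.symm hac) (Ne.symm hbc) hab with h2 | h2
    · exact shared a b c ha hb hc hab hac hbc h1 (compsymm h2)
    · exact shared b a c hb ha hc (Ne.symm hab) hbc hac (compsymm h1) (compsymm h2)
  · rcases claimA b a c hb (Ne.symm hab) hbc hac with h2 | h2
    · exact shared a b c ha hb hc hab hac hbc (compsymm h2) h1
    · exact shared c a b hc ha hb (Ne.symm hac) (Ne.symm hbc) hab (compsymm h1) (compsymm h2)

theorem stmt11 (N : Fin 8 → Finset (Fin 8))
    (hA : ∀ x, 3 ≤ (N x).card)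
    (hB : ∀ y : Fin 8, 3 ≤ (Finset.univ.filter (fun x => y ∈ N x)).card)
    (f : Fin 8 ≃ Fin 8) (hf : ∀ x, f x ∈ N x) :
    ∃ S : Finset (Fin 8), 6 ≤ S.card ∧
      ∀ x ∈ S, ∃ g : Fin 8 ≃ Fin 8, (∀ z, g z ∈ N z) ∧ g x ≠ f x := by
  classical
  set step : Fin 8 → Fin 8 → Prop := fun x y => f y ∈ N x ∧ y ≠ x with hstep
  set good : Fin 8 → Prop :=
    fun x => ∃ g : Fin 8 ≃ Fin 8, (∀ z, g z ∈ N z) ∧ g x ≠ f x with hgood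
  have hbad : ∀ t, ¬ good t → ¬ Relation.TransGen step t t :=
    fun t hb hR => hb (good_of_cycle N f hf t hR)
  have hirr : ∀ x y, step x y → y ≠ x := fun x y h => h.2
  have hout : ∀ x, 2 ≤ (Finset.univ.filter (fun y => step x y)).card := by
    intro x
    have hmap : ((N x).erase (f x)).card ≤ (Finset.univ.filter (fun y => step x y)).card := by
      apply Finset.card_le_card_of_injOn (fun w => f.symm w)
      · intro w hw
        rw [Finset.mem_coe, Finset.mem_erase] at hw
        rw [Finset.mem_coe, Finset.mem_filter]
        refine ⟨Finset.mem_univ _, ?_, ?_⟩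
        · show f (f.symm w) ∈ N x
          rw [Equiv.apply_symm_apply]
          exact hw.2
        · intro h
          apply hw.1
          rw [← Equiv.apply_symm_apply f w, show f.symm w = x from h]
      · intro a _ b _ h
        exact f.symm.injective h
    have hcd : 2 ≤ ((N x).erase (f x)).card := by
      have h1 := Finset.card_erase_of_mem (hf x)
      have h2 := hA x
      omega
    omega
  have hin : ∀ y, 2 ≤ (Finset.univ.filter (fun x => step x y)).card := by
    intro y
    have hkey : (Finset.univ.filter (fun x => f y ∈ N x)).erase y ⊆
        Finset.univ.filter (fun x => step x y) := by
      intro x hx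
      rw [Finset.mem_erase, Finset.mem_filter] at hx
      rw [Finset.mem_filter]
      exact ⟨Finset.mem_univ x, hx.2.2, Ne.symm hx.1⟩
    have h3 := hB (f y)
    have h4 := Finset.pred_card_le_card_erase
      (s := Finset.univ.filter (fun x => f y ∈ N x)) (a := y)
    have h5 := Finset.card_le_card hkey
    omega
  have hthree := no_three_bad step hirr hout hin (fun t => ¬ good t) hbad
  refine ⟨Finset.univ.filter good, ?_, ?_⟩
  · have hsplit := Finset.card_filter_add_card_filter_not
      (s := (Finset.univ : Finset (Fin 8))) good
    have hbad2 : (Finset.univ.filter (fun x => ¬ good x)).card ≤ 2 := by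
      by_contra hgt
      push_neg at hgt
      obtain ⟨a, ha⟩ := Finset.card_pos.mp
        (by omega : 0 < (Finset.univ.filter (fun x => ¬ good x)).card)
      have h2 : 1 < ((Finset.univ.filter (fun x => ¬ good x)).erase a).card := by
        have := Finset.card_erase_of_mem ha
        omega
      obtain ⟨u, hu, v, hv, huv⟩ := Finset.one_lt_card.mp h2
      rw [Finset.mem_erase, Finset.mem_filter] at hu hv
      rw [Finset.mem_filter] at ha
      rcases hthree a u v ha.2 hu.2.2 hv.2.2 with h | h | h
      · exact hu.1 h.symm
      · exact hv.1 h.symm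
      · exact huv h
    have huniv : (Finset.univ : Finset (Fin 8)).card = 8 := by simp
    omega
  · intro x hx
    rw [Finset.mem_filter] at hx
    exact hx.2
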